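/- arXiv:1308.6720 — 3 statements merged into one kernel-verified Lean document; each statement's English description precedes it below -/
import Mathlib

section
/- Let f ∈ M^{p₁}(ℝ^N) and g ∈ M^{p₂}(ℝ^N) (Marcinkiewicz/weak L^p spaces) with 1 < p₁, p₂ < ∞ and 1/p₁ + 1/p₂ > 1. Then f∗g ∈ M^r(ℝ^N) with 1/r = 1/p₁ + 1/p₂ − 1, and ‖f∗g‖_{M^r} ≤ 3r ‖f‖_{M^{p₁}} ‖g‖_{M^{p₂}}. -/
open MeasureTheory Filter ENNReal

/-- The Marcinkiewicz (weak `L^p`) quasi-norm defined through the estimate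
`∫_E |f| dμ ≤ c (μ E)^(1-1/p)` over all measurable sets `E`. -/
noncomputable def Mnorm {X : Type*} [MeasurableSpace X] (μ : Measure X) (p : ℝ)
    (f : X → ℝ) : ℝ≥0∞ :=
  sInf {c : ℝ≥0∞ | ∀ E, MeasurableSet E →
    ∫⁻ x in E, ENNReal.ofReal |f x| ∂μ ≤ c * (μ E) ^ (1 - 1/p)}

lemma mnorm_le {X : Type*} [MeasurableSpace X] {μ : Measure X} {p : ℝ} (hp : 0 < 1 - 1/p)
    (f : X → ℝ) {E : Set X} (hE : MeasurableSet E) (ha : μ E ^ (1 - 1/p) ≠ ⊤) :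
    ∫⁻ x in E, ENNReal.ofReal |f x| ∂μ ≤ Mnorm μ p f * μ E ^ (1 - 1/p) := by
  set a := μ E ^ (1 - 1/p) with ha'
  set L := ∫⁻ x in E, ENNReal.ofReal |f x| ∂μ with hL
  by_cases h0 : a = 0
  · have hE0 : μ E = 0 := by
      rcases ENNReal.rpow_eq_zero_iff.mp h0 with ⟨h, _⟩ | ⟨_, h⟩
      · exact h
      · linarith
    have : L = 0 := by rw [hL, Measure.restrict_eq_zero.mpr hE0, lintegral_zero_measure]
    simp [this]
  · rw [← ENNReal.div_le_iff h0 ha]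
    apply le_sInf
    intro c hc
    rw [ENNReal.div_le_iff h0 ha]
    exact hc E hE

lemma mnorm_ae_zero {X : Type*} [MeasurableSpace X] {μ : Measure X} [SigmaFinite μ] {p : ℝ}
    (hp : 0 < 1 - 1/p) {f : X → ℝ} (hf : Measurable f) (h0 : Mnorm μ p f = 0) :
    f =ᵐ[μ] 0 := by
  have key : ∀ n : ℕ, μ ({x | f x ≠ 0} ∩ spanningSets μ n) = 0 := by
    intro n
    set T := {x | f x ≠ 0} ∩ spanningSets μ n with hT
    have hTm : MeasurableSet T :=
      ((hf (measurableSet_singleton 0)).compl).inter (measurableSet_spanningSets μ n)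
    have hTfin : μ T ≠ ⊤ :=
      ne_of_lt (lt_of_le_of_lt (measure_mono Set.inter_subset_right) (measure_spanningSets_lt_top μ n))
    have hint : ∫⁻ x in T, ENNReal.ofReal |f x| ∂μ = 0 := by
      have := mnorm_le hp f hTm (ENNReal.rpow_ne_top_of_nonneg (le_of_lt hp) hTfin)
      rw [h0, zero_mul] at this
      exact le_antisymm this (zero_le)
    have hmeas : Measurable fun x => ENNReal.ofReal |f x| :=
      ENNReal.measurable_ofReal.comp hf.abs
    have hae : ∀ᵐ x ∂μ.restrict T, ENNReal.ofReal |f x| = 0 :=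
      (lintegral_eq_zero_iff hmeas).mp hint
    have hae2 : ∀ᵐ x ∂μ, x ∉ T := by
      filter_upwards [(ae_restrict_iff' hTm).mp hae] with x hx
      intro hxT
      have h1 : ENNReal.ofReal |f x| = 0 := hx hxT
      have h2 : f x ≠ 0 := hxT.1
      rw [ENNReal.ofReal_eq_zero] at h1
      have := abs_pos.mpr h2
      linarith
    exact measure_eq_zero_iff_ae_notMem.mpr hae2
  have hunion : {x | f x ≠ 0} = ⋃ n, ({x | f x ≠ 0} ∩ spanningSets μ n) := by
    rw [← Set.inter_iUnion, iUnion_spanningSets, Set.inter_univ]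
  have : μ {x | f x ≠ 0} = 0 := by
    rw [hunion]
    exact measure_iUnion_null key
  filter_upwards [measure_eq_zero_iff_ae_notMem.mp this] with x hx
  simpa using hx

lemma mnorm_zero_fun {X : Type*} [MeasurableSpace X] {μ : Measure X} {p : ℝ} {F : X → ℝ}
    (h : ∀ x, F x = 0) : Mnorm μ p F = 0 := by
  refine le_antisymm (sInf_le ?_) (zero_le)
  intro E hE
  simp [h]


-- translation: integrate g(x - y) dx over E
lemma bound_right {N : ℕ} {p : ℝ} (hp : 0 < 1 - 1/p) (g : EuclideanSpace ℝ (Fin N) → ℝ)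
    (y : EuclideanSpace ℝ (Fin N)) {E : Set (EuclideanSpace ℝ (Fin N))}
    (hE : MeasurableSet E) (hET : volume E ≠ ⊤) :
    ∫⁻ x in E, ENNReal.ofReal |g (x - y)| ≤ Mnorm volume p g * (volume E) ^ (1 - 1/p) := by
  have hmp : MeasurePreserving (· + y) (volume : Measure (EuclideanSpace ℝ (Fin N))) volume :=
    measurePreserving_add_right volume y
  have hemb : MeasurableEmbedding (· + y : EuclideanSpace ℝ (Fin N) → _) :=
    (MeasurableEquiv.addRight y).measurableEmbedding
  have h1 := hmp.setLIntegral_comp_preimage_emb hemb (fun x => ENNReal.ofReal |g (x - y)|) E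
  simp only [add_sub_cancel_right] at h1
  rw [← h1]
  have hmeas : MeasurableSet ((· + y) ⁻¹' E) := hemb.measurable hE
  have hvol : volume ((· + y) ⁻¹' E) = volume E := hmp.measure_preimage hE.nullMeasurableSet
  have := mnorm_le hp g hmeas
    (by rw [hvol]; exact ENNReal.rpow_ne_top_of_nonneg (le_of_lt hp) hET)
  rwa [hvol] at this

-- translation+reflection: integrate g(x - y) dy over F
lemma bound_left {N : ℕ} {p : ℝ} (hp : 0 < 1 - 1/p) (g : EuclideanSpace ℝ (Fin N) → ℝ)
    (x : EuclideanSpace ℝ (Fin N)) {F : Set (EuclideanSpace ℝ (Fin N))}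
    (hF : MeasurableSet F) (hFT : volume F ≠ ⊤) :
    ∫⁻ y in F, ENNReal.ofReal |g (x - y)| ≤ Mnorm volume p g * (volume F) ^ (1 - 1/p) := by
  have hmp : MeasurePreserving (fun t => x - t) (volume : Measure (EuclideanSpace ℝ (Fin N))) volume :=
    Measure.measurePreserving_sub_left volume x
  have hemb : MeasurableEmbedding (fun t : EuclideanSpace ℝ (Fin N) => x - t) :=
    (MeasurableEquiv.subLeft x).measurableEmbedding
  have h1 := hmp.setLIntegral_comp_preimage_emb hemb (fun z => ENNReal.ofReal |g z|)
    ((fun t => x - t) ⁻¹' F)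
  have hset : (fun t => x - t) ⁻¹' ((fun t => x - t) ⁻¹' F) = F := by
    ext z; simp [sub_sub_cancel]
  rw [hset] at h1
  rw [h1]
  have hmeas : MeasurableSet ((fun t => x - t) ⁻¹' F) := hemb.measurable hF
  have hvol : volume ((fun t => x - t) ⁻¹' F) = volume F := hmp.measure_preimage hF.nullMeasurableSet
  have := mnorm_le hp g hmeas
    (by rw [hvol]; exact ENNReal.rpow_ne_top_of_nonneg (le_of_lt hp) hFT)
  rwa [hvol] at this

-- layer cake building block
lemma slice_eq (a : ℝ≥0∞) :
    ∫⁻ t in Set.Ioi (0:ℝ), {s : ℝ | ENNReal.ofReal s < a}.indicator (fun _ => (1:ℝ≥0∞)) t = a := by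
  have hS : MeasurableSet {s : ℝ | ENNReal.ofReal s < a} :=
    ENNReal.measurable_ofReal (measurableSet_Iio)
  rw [lintegral_indicator hS, Measure.restrict_restrict hS, setLIntegral_one]
  by_cases ha : a = ⊤
  · have : {s : ℝ | ENNReal.ofReal s < a} ∩ Set.Ioi 0 = Set.Ioi 0 := by
      ext t; simp [ha, ENNReal.ofReal_lt_top]
    rw [this, ha, Real.volume_Ioi]
  · have : {s : ℝ | ENNReal.ofReal s < a} ∩ Set.Ioi 0 = Set.Ioo 0 a.toReal := by
      ext t
      simp only [Set.mem_inter_iff, Set.mem_setOf_eq, Set.mem_Ioi, Set.mem_Ioo]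
      constructor
      · rintro ⟨h1, h2⟩
        exact ⟨h2, (ENNReal.ofReal_lt_iff_lt_toReal (le_of_lt h2) ha).mp h1⟩
      · rintro ⟨h1, h2⟩
        exact ⟨(ENNReal.ofReal_lt_iff_lt_toReal (le_of_lt h1) ha).mpr h2, h1⟩
    rw [this, Real.volume_Ioo, sub_zero, ENNReal.ofReal_toReal ha]

lemma layercake {X : Type*} [MeasurableSpace X] {μ : Measure X} [SigmaFinite μ]
    (w h : X → ℝ≥0∞) (hw : Measurable w) (hh : Measurable h) :
    ∫⁻ y, w y * h y ∂μ =
      ∫⁻ t in Set.Ioi (0:ℝ), ∫⁻ y in {y | ENNReal.ofReal t < h y}, w y ∂μ := by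
  have hbig : MeasurableSet {p : X × ℝ | ENNReal.ofReal p.2 < h p.1} := by
    apply measurableSet_lt
    · exact ENNReal.measurable_ofReal.comp measurable_snd
    · exact hh.comp measurable_fst
  have hind : ∀ (y : X) (t : ℝ),
      {s : ℝ | ENNReal.ofReal s < h y}.indicator (fun _ => (1:ℝ≥0∞)) t =
      {p : X × ℝ | ENNReal.ofReal p.2 < h p.1}.indicator (fun _ => (1:ℝ≥0∞)) (y, t) := by
    intro y t
    simp only [Set.indicator_apply, Set.mem_setOf_eq]
  calc ∫⁻ y, w y * h y ∂μ
      = ∫⁻ y, ∫⁻ t in Set.Ioi (0:ℝ),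
          w y * {p : X × ℝ | ENNReal.ofReal p.2 < h p.1}.indicator (fun _ => (1:ℝ≥0∞)) (y, t) ∂volume ∂μ := by
        refine lintegral_congr fun y => ?_
        have hm : Measurable fun t : ℝ =>
            {p : X × ℝ | ENNReal.ofReal p.2 < h p.1}.indicator (fun _ => (1:ℝ≥0∞)) (y, t) :=
          (measurable_const.indicator hbig).comp measurable_prodMk_left
        rw [lintegral_const_mul _ hm]
        congr 1
        rw [← slice_eq (h y)]
        refine lintegral_congr fun t => (hind y t)
    _ = ∫⁻ t in Set.Ioi (0:ℝ), ∫⁻ y,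
          w y * {p : X × ℝ | ENNReal.ofReal p.2 < h p.1}.indicator (fun _ => (1:ℝ≥0∞)) (y, t) ∂μ ∂volume := by
        apply lintegral_lintegral_swap
        apply Measurable.aemeasurable
        apply Measurable.mul
        · exact hw.comp measurable_fst
        · exact (measurable_const.indicator hbig)
    _ = ∫⁻ t in Set.Ioi (0:ℝ), ∫⁻ y in {y | ENNReal.ofReal t < h y}, w y ∂μ ∂volume := by
        refine lintegral_congr fun t => ?_
        have hset : MeasurableSet {y | ENNReal.ofReal t < h y} := hh measurableSet_Ioi
        rw [← lintegral_indicator hset]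
        refine lintegral_congr fun y => ?_
        simp only [Set.indicator_apply, Set.mem_setOf_eq]
        by_cases hy : ENNReal.ofReal t < h y <;> simp [hy]

lemma meas_rpow_neg (α : ℝ) : Measurable fun t : ℝ => t ^ (-α) := by
  measurability

set_option maxHeartbeats 1000000 in
lemma key {N : ℕ} {p₁ p₂ r : ℝ} (hp₁ : 1 < p₁) (hp₂ : 1 < p₂)
    (hsum : 1 < 1/p₁ + 1/p₂) (hr : 1/r = 1/p₁ + 1/p₂ - 1)
    (f g : EuclideanSpace ℝ (Fin N) → ℝ) (hf : Measurable f) (hg : Measurable g)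
    (hCfT : Mnorm volume p₁ f ≠ ⊤) (hCgT : Mnorm volume p₂ g ≠ ⊤)
    (hCg0 : Mnorm volume p₂ g ≠ 0)
    {E : Set (EuclideanSpace ℝ (Fin N))} (hE : MeasurableSet E)
    (hE0 : volume E ≠ 0) (hET : volume E ≠ ⊤) :
    ∫⁻ x in E, ENNReal.ofReal |∫ y, f y * g (x - y)| ≤
      ENNReal.ofReal (3*r) * Mnorm volume p₁ f * Mnorm volume p₂ g * (volume E) ^ (1 - 1/r) := by
  -- basic real arithmetic
  have hp₁0 : (0:ℝ) < p₁ := by linarith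
  have hp₂0 : (0:ℝ) < p₂ := by linarith
  set e₁ : ℝ := 1 - 1/p₁ with he₁def
  set e₂ : ℝ := 1 - 1/p₂ with he₂def
  have he₁ : 0 < e₁ := by
    have : 1/p₁ < 1 := by rw [div_lt_one hp₁0]; exact hp₁
    rw [he₁def]; linarith
  have he₂ : 0 < e₂ := by
    have : 1/p₂ < 1 := by rw [div_lt_one hp₂0]; exact hp₂
    rw [he₂def]; linarith
  have hr0 : (0:ℝ) < r := by
    have h1r : 0 < 1/r := by rw [hr]; linarith
    exact one_div_pos.mp h1r
  set α : ℝ := p₂ * e₁ with hαdef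
  have hα0 : 0 < α := mul_pos hp₂0 he₁
  have hα1 : α < 1 := by
    have h1 : e₁ < 1/p₂ := by rw [he₁def]; linarith
    calc α < p₂ * (1/p₂) := by exact mul_lt_mul_of_pos_left h1 hp₂0
    _ = 1 := by field_simp
  have h1mα : 1 - α = p₂ / r := by
    rw [div_eq_mul_inv, ← one_div, hr, hαdef, he₁def]
    field_simp
    ring
  have hexp : α + e₂ * (1 - α) = 1 - 1/r := by
    rw [hr, hαdef, he₁def, he₂def]
    field_simp
    ring
  -- ENNReal quantities
  set Cf := Mnorm volume p₁ f with hCfdef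
  set Cg := Mnorm volume p₂ g with hCgdef
  set μE := (volume E : ℝ≥0∞) with hμEdef
  set X := Cg * μE with hXdef
  have hX0 : X ≠ 0 := mul_ne_zero hCg0 hE0
  have hXT : X ≠ ⊤ := ENNReal.mul_ne_top hCgT hET
  set M := Cg * μE ^ e₂ with hMdef
  have hM0 : M ≠ 0 := by
    apply mul_ne_zero hCg0
    simp only [ne_eq, ENNReal.rpow_eq_zero_iff, not_or]
    exact ⟨fun h => hE0 h.1, fun h => hET h.1⟩
  have hMT : M ≠ ⊤ := ENNReal.mul_ne_top hCgT (ENNReal.rpow_ne_top_of_nonneg (le_of_lt he₂) hET)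
  set m := M.toReal with hmdef
  have hm0 : 0 < m := ENNReal.toReal_pos hM0 hMT
  have hMm : M = ENNReal.ofReal m := (ENNReal.ofReal_toReal hMT).symm
  -- the function h
  set h : EuclideanSpace ℝ (Fin N) → ℝ≥0∞ :=
    fun y => ∫⁻ x in E, ENNReal.ofReal |g (x - y)| with hhdef
  have hhm : Measurable h := by
    have hrepr : (fun y : EuclideanSpace ℝ (Fin N) => ∫⁻ x in E, ENNReal.ofReal |g (x - y)|) =
        fun y => ∫⁻ x, (Prod.snd ⁻¹' E).indicator
          (fun p : EuclideanSpace ℝ (Fin N) × EuclideanSpace ℝ (Fin N) =>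
            ENNReal.ofReal |g (p.2 - p.1)|) (y, x) := by
      funext y
      rw [← lintegral_indicator hE]
      refine lintegral_congr fun x => ?_
      by_cases hx : x ∈ E <;> simp [Set.indicator_apply, hx]
    rw [hhdef, hrepr]
    exact Measurable.lintegral_prod_right' (Measurable.indicator
      (ENNReal.measurable_ofReal.comp ((hg.comp (measurable_snd.sub measurable_fst)).abs))
      (measurable_snd hE))
  have hhM : ∀ y, h y ≤ M := fun y => bound_right he₂ g y hE hET
  -- step 1 : reduce to ∫ |f| * h
  have step1 : ∫⁻ x in E, ENNReal.ofReal |∫ y, f y * g (x - y)| ≤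
      ∫⁻ y, ENNReal.ofReal |f y| * h y := by
    have conv_le : ∀ x, ENNReal.ofReal |∫ y, f y * g (x - y)| ≤
        ∫⁻ y, ENNReal.ofReal |f y| * ENNReal.ofReal |g (x - y)| := by
      intro x
      calc ENNReal.ofReal |∫ y, f y * g (x - y)| = ↑‖∫ y, f y * g (x - y)‖₊ := by
            rw [← Real.norm_eq_abs, ofReal_norm, enorm_eq_nnnorm]
      _ ≤ ∫⁻ y, ↑‖f y * g (x - y)‖₊ := enorm_integral_le_lintegral_enorm _
      _ = ∫⁻ y, ENNReal.ofReal |f y| * ENNReal.ofReal |g (x - y)| := by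
            refine lintegral_congr fun y => ?_
            rw [nnnorm_mul, ENNReal.coe_mul, ← enorm_eq_nnnorm, ← enorm_eq_nnnorm, ← ofReal_norm,
              ← ofReal_norm, Real.norm_eq_abs, Real.norm_eq_abs]
    calc ∫⁻ x in E, ENNReal.ofReal |∫ y, f y * g (x - y)| ≤
        ∫⁻ x in E, ∫⁻ y, ENNReal.ofReal |f y| * ENNReal.ofReal |g (x - y)| :=
          lintegral_mono fun x => conv_le x
    _ = ∫⁻ y, ∫⁻ x in E, ENNReal.ofReal |f y| * ENNReal.ofReal |g (x - y)| := by
          apply lintegral_lintegral_swap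
          apply Measurable.aemeasurable
          exact ((ENNReal.measurable_ofReal.comp (hf.comp measurable_snd).abs).mul
            (ENNReal.measurable_ofReal.comp ((hg.comp (measurable_fst.sub measurable_snd)).abs)))
    _ = ∫⁻ y, ENNReal.ofReal |f y| * h y := by
          refine lintegral_congr fun y => ?_
          rw [hhdef]
          exact lintegral_const_mul' _ _ ENNReal.ofReal_ne_top
  -- superlevel sets of h
  have hAm : ∀ t : ℝ, MeasurableSet {y | ENNReal.ofReal t < h y} :=
    fun t => hhm measurableSet_Ioi
  have measA : ∀ t : ℝ, 0 < t →
      volume {y | ENNReal.ofReal t < h y} ≤ (X / ENNReal.ofReal t) ^ p₂ := by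
    intro t ht
    set s := ENNReal.ofReal t with hsdef
    have hs0 : s ≠ 0 := by
      rw [hsdef, ne_eq, ENNReal.ofReal_eq_zero]
      linarith
    have hsT : s ≠ ⊤ := ENNReal.ofReal_ne_top
    have keyn : ∀ n : ℕ, volume ({y | s < h y} ∩ Metric.closedBall 0 n) ≤ (X / s) ^ p₂ := by
      intro n
      set B := {y | s < h y} ∩ Metric.closedBall 0 n with hBdef
      have hBm : MeasurableSet B := (hAm t).inter measurableSet_closedBall
      have hBT : volume B ≠ ⊤ :=
        ne_of_lt (lt_of_le_of_lt (measure_mono Set.inter_subset_right) measure_closedBall_lt_top)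
      have h1 : s * volume B ≤ ∫⁻ y in B, h y := by
        rw [← setLIntegral_const B s]
        exact setLIntegral_mono' hBm fun y hy => le_of_lt hy.1
      have h2 : ∫⁻ y in B, h y ≤ X * volume B ^ e₂ := by
        have hswap : ∫⁻ y in B, ∫⁻ x in E, ENNReal.ofReal |g (x - y)| =
            ∫⁻ x in E, ∫⁻ y in B, ENNReal.ofReal |g (x - y)| := by
          apply lintegral_lintegral_swap
          exact (ENNReal.measurable_ofReal.comp
            ((hg.comp (measurable_snd.sub measurable_fst)).abs)).aemeasurable
        calc ∫⁻ y in B, h y = ∫⁻ x in E, ∫⁻ y in B, ENNReal.ofReal |g (x - y)| := hswap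
        _ ≤ ∫⁻ x in E, Cg * volume B ^ e₂ :=
            lintegral_mono fun x => bound_left he₂ g x hBm hBT
        _ = Cg * volume B ^ e₂ * μE := setLIntegral_const E _
        _ = X * volume B ^ e₂ := by rw [hXdef]; ring
      by_cases hB0 : volume B = 0
      · rw [hB0]
        exact zero_le
      · set b := volume B with hbdef
        have hbe0 : b ^ e₂ ≠ 0 := by
          simp only [ne_eq, ENNReal.rpow_eq_zero_iff, not_or]
          exact ⟨fun hc => hB0 hc.1, fun hc => hBT hc.1⟩
        have hbeT : b ^ e₂ ≠ ⊤ := ENNReal.rpow_ne_top_of_nonneg (le_of_lt he₂) hBT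
        have hsplit : b = b ^ (1/p₂) * b ^ e₂ := by
          rw [← ENNReal.rpow_add _ _ hB0 hBT, he₂def]
          norm_num
        have hb2 : (s * b ^ (1/p₂)) * b ^ e₂ ≤ X * b ^ e₂ := by
          calc (s * b ^ (1/p₂)) * b ^ e₂ = s * (b ^ (1/p₂) * b ^ e₂) := by ring
          _ = s * b := by rw [← hsplit]
          _ ≤ ∫⁻ y in B, h y := h1
          _ ≤ X * b ^ e₂ := h2
        have hb3 : s * b ^ (1/p₂) ≤ X := (ENNReal.mul_le_mul_iff_left hbe0 hbeT).mp hb2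
        have hb4 : b ^ (1/p₂) ≤ X / s := by
          rw [ENNReal.le_div_iff_mul_le (Or.inl hs0) (Or.inl hsT)]
          rw [mul_comm]
          exact hb3
        calc b = (b ^ (1/p₂)) ^ p₂ := by
              rw [← ENNReal.rpow_mul, one_div, inv_mul_cancel₀ (ne_of_gt hp₂0), ENNReal.rpow_one]
        _ ≤ (X / s) ^ p₂ := ENNReal.rpow_le_rpow hb4 (le_of_lt hp₂0)
    have hA : {y | s < h y} = ⋃ n : ℕ, ({y | s < h y} ∩ Metric.closedBall 0 n) := by
      ext y
      simp only [Set.mem_iUnion, Set.mem_inter_iff, Metric.mem_closedBall, dist_zero_right,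
        Set.mem_setOf_eq]
      constructor
      · intro hy
        obtain ⟨n, hn⟩ := exists_nat_ge ‖y‖
        exact ⟨n, hy, hn⟩
      · rintro ⟨n, hn, _⟩
        exact hn
    have hdir : Directed (· ⊆ ·) (fun n : ℕ => {y | s < h y} ∩ Metric.closedBall 0 n) := by
      apply Monotone.directed_le
      intro i j hij
      exact Set.inter_subset_inter_right _ (Metric.closedBall_subset_closedBall (by exact_mod_cast hij))
    rw [hA, hdir.measure_iUnion]
    exact iSup_le keyn
  -- layer cake and main bound
  have main : ∫⁻ y, ENNReal.ofReal |f y| * h y ≤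
      Cf * X ^ α * ENNReal.ofReal (m ^ (1-α) / (1-α)) := by
    rw [layercake (fun y => ENNReal.ofReal |f y|) h
      (ENNReal.measurable_ofReal.comp hf.abs) hhm]
    have hun : Set.Ioi (0:ℝ) = Set.Ioo 0 m ∪ Set.Ici m := (Set.Ioo_union_Ici_eq_Ioi hm0).symm
    rw [hun, lintegral_union measurableSet_Ici
      ((Set.Iio_disjoint_Ici le_rfl).mono_left Set.Ioo_subset_Iio_self)]
    have hzero : ∫⁻ t in Set.Ici m,
        ∫⁻ y in {y | ENNReal.ofReal t < h y}, ENNReal.ofReal |f y| = 0 := by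
      have hcongr : ∀ t ∈ Set.Ici m,
          (∫⁻ y in {y | ENNReal.ofReal t < h y}, ENNReal.ofReal |f y|) = (0:ℝ≥0∞) := by
        intro t ht
        have hempty : {y | ENNReal.ofReal t < h y} = ∅ := by
          ext y
          simp only [Set.mem_setOf_eq, Set.mem_empty_iff_false, iff_false, not_lt]
          calc h y ≤ M := hhM y
          _ = ENNReal.ofReal m := hMm
          _ ≤ ENNReal.ofReal t := ENNReal.ofReal_le_ofReal ht
        rw [hempty, Measure.restrict_empty, lintegral_zero_measure]
      rw [setLIntegral_congr_fun measurableSet_Ici hcongr, lintegral_zero]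
    rw [hzero, add_zero]
    have hCXT : Cf * X ^ α ≠ ⊤ :=
      ENNReal.mul_ne_top hCfT (ENNReal.rpow_ne_top_of_nonneg (le_of_lt hα0) hXT)
    have hb : ∫⁻ t in Set.Ioo 0 m,
        ∫⁻ y in {y | ENNReal.ofReal t < h y}, ENNReal.ofReal |f y| ≤
        ∫⁻ t in Set.Ioo 0 m, (Cf * X ^ α) * ENNReal.ofReal (t ^ (-α)) := by
      apply setLIntegral_mono
      · exact (ENNReal.measurable_ofReal.comp (meas_rpow_neg α)).const_mul _
      · intro t ht
        have hAle := measA t ht.1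
        have hAfin : volume {y | ENNReal.ofReal t < h y} ≠ ⊤ := by
          apply ne_top_of_le_ne_top _ hAle
          exact ENNReal.rpow_ne_top_of_nonneg (le_of_lt hp₂0)
            (ne_of_lt (ENNReal.div_lt_top hXT (by
              rw [ne_eq, ENNReal.ofReal_eq_zero]; linarith [ht.1])))
        calc ∫⁻ y in {y | ENNReal.ofReal t < h y}, ENNReal.ofReal |f y| ≤
            Cf * (volume {y | ENNReal.ofReal t < h y}) ^ e₁ :=
              mnorm_le he₁ f (hAm t) (ENNReal.rpow_ne_top_of_nonneg (le_of_lt he₁) hAfin)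
        _ ≤ Cf * ((X / ENNReal.ofReal t) ^ p₂) ^ e₁ :=
              mul_le_mul_right (ENNReal.rpow_le_rpow hAle (le_of_lt he₁)) _
        _ = Cf * (X / ENNReal.ofReal t) ^ α := by rw [← ENNReal.rpow_mul, ← hαdef]
        _ = (Cf * X ^ α) * ENNReal.ofReal (t ^ (-α)) := by
              rw [ENNReal.div_rpow_of_nonneg _ _ (le_of_lt hα0),
                ENNReal.ofReal_rpow_of_pos ht.1, div_eq_mul_inv,
                ← ENNReal.ofReal_inv_of_pos (Real.rpow_pos_of_pos ht.1 α),
                ← Real.rpow_neg (le_of_lt ht.1)]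
              ring
    refine le_trans hb ?_
    rw [lintegral_const_mul' _ _ hCXT]
    have hint : ∫⁻ t in Set.Ioo 0 m, ENNReal.ofReal (t ^ (-α)) =
        ENNReal.ofReal (m ^ (1-α) / (1-α)) := by
      have hInt : IntegrableOn (fun t : ℝ => t ^ (-α)) (Set.Ioo 0 m) := by
        have h1 : IntervalIntegrable (fun t : ℝ => t ^ (-α)) volume 0 m :=
          intervalIntegral.intervalIntegrable_rpow' (by linarith)
        exact ((intervalIntegrable_iff_integrableOn_Ioc_of_le (le_of_lt hm0)).mp h1).mono_set
          Set.Ioo_subset_Ioc_self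
      rw [← ofReal_integral_eq_lintegral_ofReal hInt ?_]
      · congr 1
        rw [← MeasureTheory.integral_Ioc_eq_integral_Ioo,
          ← intervalIntegral.integral_of_le (le_of_lt hm0),
          integral_rpow (Or.inl (by linarith)),
          Real.zero_rpow (by linarith : -α + 1 ≠ 0)]
        rw [show -α + 1 = 1 - α by ring]
        ring
      · filter_upwards [ae_restrict_mem measurableSet_Ioo] with t ht
        exact Real.rpow_nonneg (le_of_lt ht.1) _
    rw [hint]
  -- final algebra
  have hof : ENNReal.ofReal (m ^ (1-α) / (1-α)) =
      M ^ (1-α) * ENNReal.ofReal (1/(1-α)) := by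
    rw [div_eq_mul_one_div, ENNReal.ofReal_mul (Real.rpow_nonneg (le_of_lt hm0) _)]
    congr 1
    rw [hmdef, ENNReal.toReal_rpow,
      ENNReal.ofReal_toReal (ENNReal.rpow_ne_top_of_nonneg (by linarith) hMT)]
  have hXα : X ^ α = Cg ^ α * μE ^ α := by
    rw [hXdef]; exact ENNReal.mul_rpow_of_nonneg _ _ (le_of_lt hα0)
  have hM1α : M ^ (1-α) = Cg ^ (1-α) * μE ^ (e₂ * (1-α)) := by
    rw [hMdef, ENNReal.mul_rpow_of_nonneg _ _ (by linarith : (0:ℝ) ≤ 1 - α),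
      ← ENNReal.rpow_mul]
  have hCgsum : Cg ^ α * Cg ^ (1-α) = Cg := by
    rw [← ENNReal.rpow_add _ _ hCg0 hCgT]
    norm_num
  have hμEsum : μE ^ α * μE ^ (e₂ * (1-α)) = μE ^ (1 - 1/r) := by
    rw [← ENNReal.rpow_add _ _ hE0 hET, hexp]
  have hconst : ENNReal.ofReal (1/(1-α)) ≤ ENNReal.ofReal (3*r) := by
    apply ENNReal.ofReal_le_ofReal
    rw [h1mα, one_div_div, div_le_iff₀ hp₂0]
    nlinarith
  calc ∫⁻ x in E, ENNReal.ofReal |∫ y, f y * g (x - y)| ≤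
      ∫⁻ y, ENNReal.ofReal |f y| * h y := step1
  _ ≤ Cf * X ^ α * ENNReal.ofReal (m ^ (1-α) / (1-α)) := main
  _ = Cf * (Cg ^ α * Cg ^ (1-α)) * (μE ^ α * μE ^ (e₂ * (1-α))) *
        ENNReal.ofReal (1/(1-α)) := by
      rw [hof, hXα, hM1α]; ring
  _ = Cf * Cg * μE ^ (1 - 1/r) * ENNReal.ofReal (1/(1-α)) := by rw [hCgsum, hμEsum]
  _ ≤ Cf * Cg * μE ^ (1 - 1/r) * ENNReal.ofReal (3*r) := mul_le_mul_right hconst _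
  _ = ENNReal.ofReal (3*r) * Cf * Cg * μE ^ (1 - 1/r) := by ring

theorem stmt_6 (N : ℕ) (hN : 1 ≤ N) (p₁ p₂ r : ℝ) (hp₁ : 1 < p₁) (hp₂ : 1 < p₂)
    (hsum : 1 < 1/p₁ + 1/p₂) (hr : 1/r = 1/p₁ + 1/p₂ - 1)
    (f g : EuclideanSpace ℝ (Fin N) → ℝ) (hf : Measurable f) (hg : Measurable g)
    (hfM : Mnorm volume p₁ f ≠ ⊤) (hgM : Mnorm volume p₂ g ≠ ⊤) :
    Mnorm volume r (fun x => ∫ y, f y * g (x - y)) ≠ ⊤ ∧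
    Mnorm volume r (fun x => ∫ y, f y * g (x - y)) ≤
      ENNReal.ofReal (3 * r) * Mnorm volume p₁ f * Mnorm volume p₂ g := by
  have hp₁0 : (0:ℝ) < p₁ := by linarith
  have hp₂0 : (0:ℝ) < p₂ := by linarith
  have he₁ : 0 < 1 - 1/p₁ := by
    have : 1/p₁ < 1 := by rw [div_lt_one hp₁0]; exact hp₁
    linarith
  have he₂ : 0 < 1 - 1/p₂ := by
    have : 1/p₂ < 1 := by rw [div_lt_one hp₂0]; exact hp₂
    linarith
  have hr0 : (0:ℝ) < r := by
    have h1r : 0 < 1/r := by rw [hr]; linarith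
    exact one_div_pos.mp h1r
  have hrexp : (0:ℝ) < 1 - 1/r := by
    have h1 : 1/p₁ < 1 := by rw [div_lt_one hp₁0]; exact hp₁
    have h2 : 1/p₂ < 1 := by rw [div_lt_one hp₂0]; exact hp₂
    rw [hr]; linarith
  by_cases hCf0 : Mnorm volume p₁ f = 0
  · have hf0 : f =ᵐ[volume] 0 := mnorm_ae_zero he₁ hf hCf0
    have hF : ∀ x : EuclideanSpace ℝ (Fin N), (∫ y, f y * g (x - y)) = 0 := by
      intro x
      apply integral_eq_zero_of_ae
      filter_upwards [hf0] with y hy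
      simp only [Pi.zero_apply] at hy
      simp [hy]
    have hM0 : Mnorm volume r (fun x => ∫ y, f y * g (x - y)) = 0 := mnorm_zero_fun hF
    rw [hM0]
    exact ⟨ENNReal.zero_ne_top, zero_le⟩
  by_cases hCg0 : Mnorm volume p₂ g = 0
  · have hg0 : g =ᵐ[volume] 0 := mnorm_ae_zero he₂ hg hCg0
    have hF : ∀ x : EuclideanSpace ℝ (Fin N), (∫ y, f y * g (x - y)) = 0 := by
      intro x
      apply integral_eq_zero_of_ae
      have hcomp : (g ∘ fun t => x - t) =ᵐ[volume] ((0 : EuclideanSpace ℝ (Fin N) → ℝ) ∘ fun t => x - t) :=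
        (Measure.measurePreserving_sub_left volume x).quasiMeasurePreserving.ae_eq_comp hg0
      filter_upwards [hcomp] with y hy
      simp only [Function.comp_apply, Pi.zero_apply] at hy
      simp [hy]
    have hM0 : Mnorm volume r (fun x => ∫ y, f y * g (x - y)) = 0 := mnorm_zero_fun hF
    rw [hM0]
    exact ⟨ENNReal.zero_ne_top, zero_le⟩
  -- main case
  have hKT : ENNReal.ofReal (3 * r) * Mnorm volume p₁ f * Mnorm volume p₂ g ≠ ⊤ :=
    ENNReal.mul_ne_top (ENNReal.mul_ne_top ENNReal.ofReal_ne_top hfM) hgM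
  have hK0 : ENNReal.ofReal (3 * r) * Mnorm volume p₁ f * Mnorm volume p₂ g ≠ 0 := by
    apply mul_ne_zero (mul_ne_zero _ hCf0) hCg0
    rw [ne_eq, ENNReal.ofReal_eq_zero]
    push_neg
    linarith
  have hmem : ENNReal.ofReal (3 * r) * Mnorm volume p₁ f * Mnorm volume p₂ g ∈
      {c : ℝ≥0∞ | ∀ E, MeasurableSet E →
        ∫⁻ x in E, ENNReal.ofReal |∫ y, f y * g (x - y)| ≤ c * (volume E) ^ (1 - 1/r)} := by
    intro E hE
    by_cases hE0 : volume E = 0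
    · rw [Measure.restrict_eq_zero.mpr hE0, lintegral_zero_measure]
      exact zero_le
    by_cases hET : volume E = ⊤
    · rw [hET, ENNReal.top_rpow_of_pos hrexp, ENNReal.mul_top hK0]
      exact le_top
    · exact key hp₁ hp₂ hsum hr f g hf hg hfM hgM hCg0 hE hE0 hET
  have hle : Mnorm volume r (fun x => ∫ y, f y * g (x - y)) ≤
      ENNReal.ofReal (3 * r) * Mnorm volume p₁ f * Mnorm volume p₂ g := sInf_le hmem
  exact ⟨ne_top_of_le_ne_top hKT hle, hle⟩
end

section
/- Let N ≥ 2, α ∈ (1/2,1), 0 < p < N/(N-2α+1), and R > 0. Then ∫_{B_{R}(0)} |x-y|^{2α-N} |y|^{p(2α-N-1)} dy < ∞ for every x ∈ ℝ^N ∖ {0}, and moreover for |x| ≤ R/4 and p > 2α/(N-2α+1) there is a constant c (depending on N, α, p, R) such that ∫_{B_R(0)} |x-y|^{2α-N}|y|^{p(2α-N-1)} dy ≤ c |x|^{2α - p(N+1-2α)}. -/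
open MeasureTheory Filter Metric Set
open scoped ENNReal NNReal

private lemma key_id {r c d e : ℝ} (hr : 0 < r) (hc : 0 < c) (hd : 0 < d) (he : 0 < e)
    (s t : ℝ) (k : ℕ) :
    (r * c ^ k * d) ^ s * (r * c ^ k * e) ^ t
      = (r ^ (s + t) * (d ^ s * e ^ t)) * ((c ^ (s + t)) ^ k) := by
  have h1 : ∀ x : ℝ, 0 < x → ∀ z : ℝ, (r * c ^ k * x) ^ z = r ^ z * (c ^ z) ^ k * x ^ z := by
    intro x hx z
    rw [Real.mul_rpow (by positivity) hx.le, Real.mul_rpow hr.le (by positivity),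
      ← Real.rpow_natCast c k, ← Real.rpow_mul hc.le, mul_comm (k : ℝ) z,
      Real.rpow_mul hc.le, Real.rpow_natCast]
  rw [h1 d hd s, h1 e he t, Real.rpow_add hr, Real.rpow_add hc, mul_pow]
  ring

private lemma annulus_bound (N : ℕ) [NeZero N] {s : ℝ} (hs : s < 0) {a b : ℝ} (ha : 0 < a)
    (hb : 0 ≤ b) :
    (∫⁻ y in {y : EuclideanSpace ℝ (Fin N) | a < ‖y‖ ∧ ‖y‖ ≤ b},
        ENNReal.ofReal (‖y‖ ^ s)) ≤
      ENNReal.ofReal (a ^ s * b ^ (N : ℝ)) *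
        volume (closedBall (0 : EuclideanSpace ℝ (Fin N)) 1) := by
  have hmeas : MeasurableSet {y : EuclideanSpace ℝ (Fin N) | a < ‖y‖ ∧ ‖y‖ ≤ b} := by
    apply MeasurableSet.inter
    · exact measurableSet_lt measurable_const measurable_norm
    · exact measurableSet_le measurable_norm measurable_const
  calc (∫⁻ y in {y : EuclideanSpace ℝ (Fin N) | a < ‖y‖ ∧ ‖y‖ ≤ b}, ENNReal.ofReal (‖y‖ ^ s))
      ≤ ∫⁻ _ in {y : EuclideanSpace ℝ (Fin N) | a < ‖y‖ ∧ ‖y‖ ≤ b},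
          ENNReal.ofReal (a ^ s) := by
        refine setLIntegral_mono' hmeas fun y hy => ?_
        exact ENNReal.ofReal_le_ofReal
          (Real.rpow_le_rpow_of_nonpos ha hy.1.le hs.le)
    _ = ENNReal.ofReal (a ^ s) *
          volume {y : EuclideanSpace ℝ (Fin N) | a < ‖y‖ ∧ ‖y‖ ≤ b} := setLIntegral_const _ _
    _ ≤ ENNReal.ofReal (a ^ s) *
          volume (closedBall (0 : EuclideanSpace ℝ (Fin N)) b) := by
        refine mul_le_mul_right (measure_mono fun y hy => ?_) _
        simpa [mem_closedBall, dist_eq_norm] using hy.2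
    _ = ENNReal.ofReal (a ^ s * b ^ (N : ℝ)) *
          volume (closedBall (0 : EuclideanSpace ℝ (Fin N)) 1) := by
        rw [Measure.addHaar_closedBall' _ _ hb, ← Real.rpow_natCast b,
          finrank_euclideanSpace_fin, ENNReal.ofReal_mul (Real.rpow_nonneg ha.le _), mul_assoc]

private lemma lemA (N : ℕ) [NeZero N] {s : ℝ} (hs₁ : -(N : ℝ) < s) (hs₂ : s < 0) :
    ∃ K : ℝ≥0∞, K ≠ ⊤ ∧ ∀ r : ℝ, 0 < r →
      (∫⁻ y in ball (0 : EuclideanSpace ℝ (Fin N)) r, ENNReal.ofReal (‖y‖ ^ s)) ≤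
        K * ENNReal.ofReal (r ^ ((N : ℝ) + s)) := by
  set q : ℝ := (2 : ℝ)⁻¹ ^ (s + (N : ℝ)) with hq_def
  have hq0 : 0 < q := Real.rpow_pos_of_pos (by norm_num) _
  have hq1 : q < 1 := by
    apply Real.rpow_lt_one (by norm_num) (by norm_num)
    linarith
  have hVne : volume (closedBall (0 : EuclideanSpace ℝ (Fin N)) 1) ≠ ⊤ :=
    measure_closedBall_lt_top.ne
  have hgeom : (1 - ENNReal.ofReal q)⁻¹ ≠ ⊤ := by
    rw [ENNReal.inv_ne_top, ← pos_iff_ne_zero, tsub_pos_iff_lt]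
    exact ENNReal.ofReal_lt_one.2 hq1
  refine ⟨ENNReal.ofReal ((2 : ℝ)⁻¹ ^ s * (1 : ℝ) ^ (N : ℝ)) *
      volume (closedBall (0 : EuclideanSpace ℝ (Fin N)) 1) * (1 - ENNReal.ofReal q)⁻¹,
    by finiteness, fun r hr => ?_⟩
  set S : ℕ → Set (EuclideanSpace ℝ (Fin N)) :=
    fun k => {y | r * (2⁻¹ : ℝ) ^ k * 2⁻¹ < ‖y‖ ∧ ‖y‖ ≤ r * (2⁻¹ : ℝ) ^ k * 1} with hS_def
  have hcover : ball (0 : EuclideanSpace ℝ (Fin N)) r ⊆ {0} ∪ ⋃ k, S k := by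
    intro y hy
    rcases eq_or_ne y 0 with h | h
    · exact Or.inl h
    refine Or.inr (mem_iUnion.2 ?_)
    have hy0 : 0 < ‖y‖ := norm_pos_iff.2 h
    have hyr : ‖y‖ < r := by simpa [mem_ball, dist_eq_norm] using hy
    have ht1 : 1 < r / ‖y‖ := (one_lt_div hy0).2 hyr
    refine ⟨⌊Real.logb 2 (r / ‖y‖)⌋₊, ?_, ?_⟩
    · have h2 : r / ‖y‖ < 2 ^ (⌊Real.logb 2 (r / ‖y‖)⌋₊ + 1) := by
        have := Nat.lt_floor_add_one (Real.logb 2 (r / ‖y‖))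
        calc r / ‖y‖ = (2 : ℝ) ^ Real.logb 2 (r / ‖y‖) :=
              (Real.rpow_logb (by norm_num) (by norm_num) (by linarith)).symm
          _ < (2 : ℝ) ^ ((⌊Real.logb 2 (r / ‖y‖)⌋₊ : ℝ) + 1) :=
              Real.rpow_lt_rpow_of_exponent_lt (by norm_num) (by push_cast at this ⊢; linarith)
          _ = 2 ^ (⌊Real.logb 2 (r / ‖y‖)⌋₊ + 1) := by
              rw [← Real.rpow_natCast 2 (⌊Real.logb 2 (r / ‖y‖)⌋₊ + 1)]; push_cast; ring_nf
      have hpow : (0 : ℝ) < 2 ^ (⌊Real.logb 2 (r / ‖y‖)⌋₊ + 1) := by positivity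
      have hlt : r < 2 ^ (⌊Real.logb 2 (r / ‖y‖)⌋₊ + 1) * ‖y‖ := (div_lt_iff₀ hy0).1 h2
      have h3 : r * (2⁻¹ : ℝ) ^ ⌊Real.logb 2 (r / ‖y‖)⌋₊ * 2⁻¹
          = r / 2 ^ (⌊Real.logb 2 (r / ‖y‖)⌋₊ + 1) := by
        rw [inv_pow, pow_succ]; field_simp
      show r * (2⁻¹ : ℝ) ^ ⌊Real.logb 2 (r / ‖y‖)⌋₊ * 2⁻¹ < ‖y‖
      rw [h3, div_lt_iff₀ hpow]
      exact lt_of_lt_of_le hlt (le_of_eq (mul_comm _ _))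
    · have hlogb0 : 0 ≤ Real.logb 2 (r / ‖y‖) := Real.logb_nonneg (by norm_num) ht1.le
      have h1 : (2 : ℝ) ^ ⌊Real.logb 2 (r / ‖y‖)⌋₊ ≤ r / ‖y‖ := by
        calc (2 : ℝ) ^ ⌊Real.logb 2 (r / ‖y‖)⌋₊
            = (2 : ℝ) ^ (⌊Real.logb 2 (r / ‖y‖)⌋₊ : ℝ) := (Real.rpow_natCast _ _).symm
          _ ≤ (2 : ℝ) ^ Real.logb 2 (r / ‖y‖) :=
              Real.rpow_le_rpow_of_exponent_le (by norm_num) (Nat.floor_le hlogb0)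
          _ = r / ‖y‖ := Real.rpow_logb (by norm_num) (by norm_num) (by linarith)
      have hpow : (0 : ℝ) < 2 ^ ⌊Real.logb 2 (r / ‖y‖)⌋₊ := by positivity
      have hle : (2 : ℝ) ^ ⌊Real.logb 2 (r / ‖y‖)⌋₊ * ‖y‖ ≤ r := (le_div_iff₀ hy0).1 h1
      have h4 : r * (2⁻¹ : ℝ) ^ ⌊Real.logb 2 (r / ‖y‖)⌋₊ * 1
          = r / 2 ^ ⌊Real.logb 2 (r / ‖y‖)⌋₊ := by
        rw [inv_pow]; field_simp
      show ‖y‖ ≤ r * (2⁻¹ : ℝ) ^ ⌊Real.logb 2 (r / ‖y‖)⌋₊ * 1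
      rw [h4, le_div_iff₀ hpow]
      linarith
  calc (∫⁻ y in ball (0 : EuclideanSpace ℝ (Fin N)) r, ENNReal.ofReal (‖y‖ ^ s))
      ≤ ∫⁻ y in ({0} ∪ ⋃ k, S k : Set (EuclideanSpace ℝ (Fin N))),
          ENNReal.ofReal (‖y‖ ^ s) := lintegral_mono_set hcover
    _ ≤ (∫⁻ y in ({0} : Set (EuclideanSpace ℝ (Fin N))), ENNReal.ofReal (‖y‖ ^ s)) +
          ∫⁻ y in (⋃ k, S k), ENNReal.ofReal (‖y‖ ^ s) := lintegral_union_le _ _ _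
    _ = ∫⁻ y in (⋃ k, S k), ENNReal.ofReal (‖y‖ ^ s) := by
        rw [setLIntegral_measure_zero _ _ (measure_singleton _), zero_add]
    _ ≤ ∑' k, ∫⁻ y in S k, ENNReal.ofReal (‖y‖ ^ s) := lintegral_iUnion_le _ _
    _ ≤ ∑' k, ENNReal.ofReal ((r * (2⁻¹ : ℝ) ^ k * 2⁻¹) ^ s *
          (r * (2⁻¹ : ℝ) ^ k * 1) ^ (N : ℝ)) *
          volume (closedBall (0 : EuclideanSpace ℝ (Fin N)) 1) :=
        ENNReal.tsum_le_tsum fun k => annulus_bound N hs₂ (by positivity) (by positivity)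
    _ = ∑' k, (ENNReal.ofReal (r ^ (s + (N : ℝ)) * ((2 : ℝ)⁻¹ ^ s * (1 : ℝ) ^ (N : ℝ))) *
          volume (closedBall (0 : EuclideanSpace ℝ (Fin N)) 1)) * (ENNReal.ofReal q) ^ k := by
        congr 1
        funext k
        rw [key_id hr (by norm_num) (by norm_num) (by norm_num),
          ENNReal.ofReal_mul (by positivity), ← hq_def, ENNReal.ofReal_pow hq0.le]
        ring
    _ = (ENNReal.ofReal (r ^ (s + (N : ℝ)) * ((2 : ℝ)⁻¹ ^ s * (1 : ℝ) ^ (N : ℝ))) *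
          volume (closedBall (0 : EuclideanSpace ℝ (Fin N)) 1)) *
          (1 - ENNReal.ofReal q)⁻¹ := by
        rw [ENNReal.tsum_mul_left, ENNReal.tsum_geometric]
    _ = ENNReal.ofReal ((2 : ℝ)⁻¹ ^ s * (1 : ℝ) ^ (N : ℝ)) *
          volume (closedBall (0 : EuclideanSpace ℝ (Fin N)) 1) * (1 - ENNReal.ofReal q)⁻¹ *
          ENNReal.ofReal (r ^ ((N : ℝ) + s)) := by
        rw [ENNReal.ofReal_mul (by positivity), add_comm s (N : ℝ)]
        ring

private lemma lemB (N : ℕ) [NeZero N] {s : ℝ} (hs : (N : ℝ) + s < 0) :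
    ∃ K : ℝ≥0∞, K ≠ ⊤ ∧ ∀ r : ℝ, 0 < r →
      (∫⁻ y in {y : EuclideanSpace ℝ (Fin N) | r ≤ ‖y‖}, ENNReal.ofReal (‖y‖ ^ s)) ≤
        K * ENNReal.ofReal (r ^ ((N : ℝ) + s)) := by
  have hs₂ : s < 0 := by
    have : (0 : ℝ) ≤ (N : ℝ) := Nat.cast_nonneg _
    linarith
  set q : ℝ := (2 : ℝ) ^ (s + (N : ℝ)) with hq_def
  have hq0 : 0 < q := Real.rpow_pos_of_pos (by norm_num) _
  have hq1 : q < 1 := by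
    apply Real.rpow_lt_one_of_one_lt_of_neg (by norm_num)
    linarith
  have hVne : volume (closedBall (0 : EuclideanSpace ℝ (Fin N)) 1) ≠ ⊤ :=
    measure_closedBall_lt_top.ne
  have hgeom : (1 - ENNReal.ofReal q)⁻¹ ≠ ⊤ := by
    rw [ENNReal.inv_ne_top, ← pos_iff_ne_zero, tsub_pos_iff_lt]
    exact ENNReal.ofReal_lt_one.2 hq1
  refine ⟨ENNReal.ofReal ((2 : ℝ)⁻¹ ^ s * (2 : ℝ) ^ (N : ℝ)) *
      volume (closedBall (0 : EuclideanSpace ℝ (Fin N)) 1) * (1 - ENNReal.ofReal q)⁻¹,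
    by finiteness, fun r hr => ?_⟩
  set S : ℕ → Set (EuclideanSpace ℝ (Fin N)) :=
    fun k => {y | r * (2 : ℝ) ^ k * 2⁻¹ < ‖y‖ ∧ ‖y‖ ≤ r * (2 : ℝ) ^ k * 2} with hS_def
  have hcover : {y : EuclideanSpace ℝ (Fin N) | r ≤ ‖y‖} ⊆ ⋃ k, S k := by
    intro y hy
    have hy' : r ≤ ‖y‖ := hy
    have hy0 : 0 < ‖y‖ := lt_of_lt_of_le hr hy'
    have ht1 : 1 ≤ ‖y‖ / r := (one_le_div hr).2 hy'
    have htpos : 0 < ‖y‖ / r := by positivity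
    refine mem_iUnion.2 ⟨⌊Real.logb 2 (‖y‖ / r)⌋₊, ?_, ?_⟩
    · have hlogb0 : 0 ≤ Real.logb 2 (‖y‖ / r) := Real.logb_nonneg (by norm_num) ht1
      have h1 : (2 : ℝ) ^ ⌊Real.logb 2 (‖y‖ / r)⌋₊ ≤ ‖y‖ / r := by
        calc (2 : ℝ) ^ ⌊Real.logb 2 (‖y‖ / r)⌋₊
            = (2 : ℝ) ^ (⌊Real.logb 2 (‖y‖ / r)⌋₊ : ℝ) := (Real.rpow_natCast _ _).symm
          _ ≤ (2 : ℝ) ^ Real.logb 2 (‖y‖ / r) :=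
              Real.rpow_le_rpow_of_exponent_le (by norm_num) (Nat.floor_le hlogb0)
          _ = ‖y‖ / r := Real.rpow_logb (by norm_num) (by norm_num) htpos
      have hpow : (0 : ℝ) < 2 ^ ⌊Real.logb 2 (‖y‖ / r)⌋₊ := by positivity
      have h2 : r * 2 ^ ⌊Real.logb 2 (‖y‖ / r)⌋₊ ≤ ‖y‖ := by
        have h1' : (2:ℝ) ^ ⌊Real.logb 2 (‖y‖ / r)⌋₊ * r ≤ ‖y‖ := (le_div_iff₀ hr).1 h1
        linarith [mul_comm ((2:ℝ) ^ ⌊Real.logb 2 (‖y‖ / r)⌋₊) r]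
      have hpos2 : (0:ℝ) < r * 2 ^ ⌊Real.logb 2 (‖y‖ / r)⌋₊ := by positivity
      show r * (2 : ℝ) ^ ⌊Real.logb 2 (‖y‖ / r)⌋₊ * 2⁻¹ < ‖y‖
      linarith
    · have h2 : ‖y‖ / r < 2 ^ (⌊Real.logb 2 (‖y‖ / r)⌋₊ + 1) := by
        have := Nat.lt_floor_add_one (Real.logb 2 (‖y‖ / r))
        calc ‖y‖ / r = (2 : ℝ) ^ Real.logb 2 (‖y‖ / r) :=
              (Real.rpow_logb (by norm_num) (by norm_num) htpos).symm
          _ < (2 : ℝ) ^ ((⌊Real.logb 2 (‖y‖ / r)⌋₊ : ℝ) + 1) :=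
              Real.rpow_lt_rpow_of_exponent_lt (by norm_num) (by push_cast at this ⊢; linarith)
          _ = 2 ^ (⌊Real.logb 2 (‖y‖ / r)⌋₊ + 1) := by
              rw [← Real.rpow_natCast 2 (⌊Real.logb 2 (‖y‖ / r)⌋₊ + 1)]; push_cast; ring_nf
      have h3 : ‖y‖ < r * 2 ^ (⌊Real.logb 2 (‖y‖ / r)⌋₊ + 1) := by
        have := (div_lt_iff₀ hr).1 h2
        linarith
      show ‖y‖ ≤ r * (2 : ℝ) ^ ⌊Real.logb 2 (‖y‖ / r)⌋₊ * 2
      calc ‖y‖ ≤ r * 2 ^ (⌊Real.logb 2 (‖y‖ / r)⌋₊ + 1) := h3.le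
        _ = r * 2 ^ ⌊Real.logb 2 (‖y‖ / r)⌋₊ * 2 := by rw [pow_succ]; ring
  calc (∫⁻ y in {y : EuclideanSpace ℝ (Fin N) | r ≤ ‖y‖}, ENNReal.ofReal (‖y‖ ^ s))
      ≤ ∫⁻ y in (⋃ k, S k), ENNReal.ofReal (‖y‖ ^ s) := lintegral_mono_set hcover
    _ ≤ ∑' k, ∫⁻ y in S k, ENNReal.ofReal (‖y‖ ^ s) := lintegral_iUnion_le _ _
    _ ≤ ∑' k, ENNReal.ofReal ((r * (2 : ℝ) ^ k * 2⁻¹) ^ s *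
          (r * (2 : ℝ) ^ k * 2) ^ (N : ℝ)) *
          volume (closedBall (0 : EuclideanSpace ℝ (Fin N)) 1) :=
        ENNReal.tsum_le_tsum fun k => annulus_bound N hs₂ (by positivity) (by positivity)
    _ = ∑' k, (ENNReal.ofReal (r ^ (s + (N : ℝ)) * ((2 : ℝ)⁻¹ ^ s * (2 : ℝ) ^ (N : ℝ))) *
          volume (closedBall (0 : EuclideanSpace ℝ (Fin N)) 1)) * (ENNReal.ofReal q) ^ k := by
        congr 1
        funext k
        rw [key_id hr (by norm_num) (by norm_num) (by norm_num),
          ENNReal.ofReal_mul (by positivity), ← hq_def, ENNReal.ofReal_pow hq0.le]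
        ring
    _ = (ENNReal.ofReal (r ^ (s + (N : ℝ)) * ((2 : ℝ)⁻¹ ^ s * (2 : ℝ) ^ (N : ℝ))) *
          volume (closedBall (0 : EuclideanSpace ℝ (Fin N)) 1)) *
          (1 - ENNReal.ofReal q)⁻¹ := by
        rw [ENNReal.tsum_mul_left, ENNReal.tsum_geometric]
    _ = ENNReal.ofReal ((2 : ℝ)⁻¹ ^ s * (2 : ℝ) ^ (N : ℝ)) *
          volume (closedBall (0 : EuclideanSpace ℝ (Fin N)) 1) * (1 - ENNReal.ofReal q)⁻¹ *
          ENNReal.ofReal (r ^ ((N : ℝ) + s)) := by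
        rw [ENNReal.ofReal_mul (by positivity), add_comm s (N : ℝ)]
        ring

private lemma lintegral_ball_sub (N : ℕ) [NeZero N] (x : EuclideanSpace ℝ (Fin N)) (r : ℝ)
    (s : ℝ) :
    (∫⁻ y in ball x r, ENNReal.ofReal (‖x - y‖ ^ s)) =
      ∫⁻ z in ball (0 : EuclideanSpace ℝ (Fin N)) r, ENNReal.ofReal (‖z‖ ^ s) := by
  have hmp := Measure.measurePreserving_sub_left
    (volume : Measure (EuclideanSpace ℝ (Fin N))) x
  have h := hmp.setLIntegral_comp_preimage_emb
    (MeasurableEquiv.subLeft x).measurableEmbedding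
    (fun z => ENNReal.ofReal (‖z‖ ^ s)) (ball 0 r)
  have hpre : (fun y => x - y) ⁻¹' (ball (0 : EuclideanSpace ℝ (Fin N)) r) = ball x r := by
    ext y
    simp [mem_ball, dist_eq_norm, norm_sub_rev]
  rw [← hpre]
  exact h

theorem stmt_11 (N : ℕ) (hN : 2 ≤ N) (α p R : ℝ) (hα : 1/2 < α ∧ α < 1)
    (hp : 0 < p ∧ p < (N:ℝ) / ((N:ℝ) - 2*α + 1)) (hR : 0 < R) :
    (∀ x : EuclideanSpace ℝ (Fin N), x ≠ 0 →
      (∫⁻ y in Metric.ball (0 : EuclideanSpace ℝ (Fin N)) R,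
        ENNReal.ofReal (‖x - y‖ ^ (2*α - (N:ℝ)) * ‖y‖ ^ (p * (2*α - (N:ℝ) - 1)))) < ⊤) ∧
    (2*α / ((N:ℝ) - 2*α + 1) < p →
      ∃ c : ℝ, 0 < c ∧ ∀ x : EuclideanSpace ℝ (Fin N), x ≠ 0 → ‖x‖ ≤ R/4 →
        (∫⁻ y in Metric.ball (0 : EuclideanSpace ℝ (Fin N)) R,
          ENNReal.ofReal (‖x - y‖ ^ (2*α - (N:ℝ)) * ‖y‖ ^ (p * (2*α - (N:ℝ) - 1)))) ≤
          ENNReal.ofReal (c * ‖x‖ ^ (2*α - p * ((N:ℝ) + 1 - 2*α)))) := by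
  haveI : NeZero N := ⟨by omega⟩
  obtain ⟨hα1, hα2⟩ := hα
  obtain ⟨hp1, hp2⟩ := hp
  have hN2 : (2 : ℝ) ≤ (N : ℝ) := by exact_mod_cast hN
  set s1 : ℝ := 2*α - (N:ℝ) with hs1_def
  set s2 : ℝ := p * (2*α - (N:ℝ) - 1) with hs2_def
  have hden : (0 : ℝ) < (N:ℝ) - 2*α + 1 := by linarith
  have hs1a : -(N:ℝ) < s1 := by rw [hs1_def]; linarith
  have hs1b : s1 < 0 := by rw [hs1_def]; linarith
  have hpN : p * ((N:ℝ) - 2*α + 1) < (N:ℝ) := (lt_div_iff₀ hden).1 hp2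
  have hs2a : -(N:ℝ) < s2 := by rw [hs2_def]; nlinarith
  have hs2b : s2 < 0 := by
    rw [hs2_def]
    apply mul_neg_of_pos_of_neg hp1
    linarith
  obtain ⟨K1, hK1, hK1b⟩ := lemA N hs1a hs1b
  obtain ⟨K2, hK2, hK2b⟩ := lemA N hs2a hs2b
  have hFsplit : ∀ x y : EuclideanSpace ℝ (Fin N),
      ENNReal.ofReal (‖x - y‖ ^ s1 * ‖y‖ ^ s2)
        = ENNReal.ofReal (‖x - y‖ ^ s1) * ENNReal.ofReal (‖y‖ ^ s2) := fun x y =>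
    ENNReal.ofReal_mul (Real.rpow_nonneg (norm_nonneg _) _)
  constructor
  · -- Part 1: finiteness
    intro x hx
    have hd : 0 < ‖x‖ := norm_pos_iff.2 hx
    set d : ℝ := ‖x‖ with hd_def
    have hcover : ball (0 : EuclideanSpace ℝ (Fin N)) R ⊆
        ball x (d * 2⁻¹) ∪ (ball (0 : EuclideanSpace ℝ (Fin N)) R \ ball x (d * 2⁻¹)) := by
      intro y hy
      by_cases h : y ∈ ball x (d * 2⁻¹)
      · exact Or.inl h
      · exact Or.inr ⟨hy, h⟩
    have h1 : (∫⁻ y in ball x (d * 2⁻¹),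
        ENNReal.ofReal (‖x - y‖ ^ s1 * ‖y‖ ^ s2)) < ⊤ := by
      have step : ∀ y ∈ ball x (d * 2⁻¹),
          ENNReal.ofReal (‖x - y‖ ^ s1 * ‖y‖ ^ s2) ≤
            ENNReal.ofReal ((d * 2⁻¹) ^ s2) * ENNReal.ofReal (‖x - y‖ ^ s1) := by
        intro y hy
        have hxy : ‖x - y‖ < d * 2⁻¹ := by
          have : dist y x < d * 2⁻¹ := hy
          rw [dist_eq_norm] at this
          rwa [norm_sub_rev]
        have hyn : d * 2⁻¹ ≤ ‖y‖ := by
          have := norm_sub_norm_le x y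
          rw [hd_def]
          linarith
        rw [hFsplit, mul_comm]
        exact mul_le_mul' (ENNReal.ofReal_le_ofReal
          (Real.rpow_le_rpow_of_nonpos (by positivity) hyn hs2b.le)) le_rfl
      calc (∫⁻ y in ball x (d * 2⁻¹), ENNReal.ofReal (‖x - y‖ ^ s1 * ‖y‖ ^ s2))
          ≤ ∫⁻ y in ball x (d * 2⁻¹),
              ENNReal.ofReal ((d * 2⁻¹) ^ s2) * ENNReal.ofReal (‖x - y‖ ^ s1) :=
            setLIntegral_mono' measurableSet_ball step
        _ = ENNReal.ofReal ((d * 2⁻¹) ^ s2) *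
              ∫⁻ y in ball x (d * 2⁻¹), ENNReal.ofReal (‖x - y‖ ^ s1) :=
            lintegral_const_mul' _ _ ENNReal.ofReal_ne_top
        _ = ENNReal.ofReal ((d * 2⁻¹) ^ s2) *
              ∫⁻ z in ball (0 : EuclideanSpace ℝ (Fin N)) (d * 2⁻¹),
                ENNReal.ofReal (‖z‖ ^ s1) := by rw [lintegral_ball_sub]
        _ ≤ ENNReal.ofReal ((d * 2⁻¹) ^ s2) *
              (K1 * ENNReal.ofReal ((d * 2⁻¹) ^ ((N:ℝ) + s1))) :=
            mul_le_mul_right (hK1b _ (by positivity)) _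
        _ < ⊤ := by
            apply ENNReal.mul_lt_top ENNReal.ofReal_lt_top
            exact ENNReal.mul_lt_top hK1.lt_top ENNReal.ofReal_lt_top
    have h2 : (∫⁻ y in ball (0 : EuclideanSpace ℝ (Fin N)) R \ ball x (d * 2⁻¹),
        ENNReal.ofReal (‖x - y‖ ^ s1 * ‖y‖ ^ s2)) < ⊤ := by
      have step : ∀ y ∈ ball (0 : EuclideanSpace ℝ (Fin N)) R \ ball x (d * 2⁻¹),
          ENNReal.ofReal (‖x - y‖ ^ s1 * ‖y‖ ^ s2) ≤
            ENNReal.ofReal ((d * 2⁻¹) ^ s1) * ENNReal.ofReal (‖y‖ ^ s2) := by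
        intro y hy
        have hxy : d * 2⁻¹ ≤ ‖x - y‖ := by
          have : ¬ dist y x < d * 2⁻¹ := hy.2
          rw [dist_eq_norm] at this
          rw [norm_sub_rev]
          linarith [not_lt.1 this]
        rw [hFsplit]
        exact mul_le_mul' (ENNReal.ofReal_le_ofReal
          (Real.rpow_le_rpow_of_nonpos (by positivity) hxy hs1b.le)) le_rfl
      calc (∫⁻ y in ball (0 : EuclideanSpace ℝ (Fin N)) R \ ball x (d * 2⁻¹),
            ENNReal.ofReal (‖x - y‖ ^ s1 * ‖y‖ ^ s2))
          ≤ ∫⁻ y in ball (0 : EuclideanSpace ℝ (Fin N)) R \ ball x (d * 2⁻¹),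
              ENNReal.ofReal ((d * 2⁻¹) ^ s1) * ENNReal.ofReal (‖y‖ ^ s2) :=
            setLIntegral_mono' (measurableSet_ball.diff measurableSet_ball) step
        _ = ENNReal.ofReal ((d * 2⁻¹) ^ s1) *
              ∫⁻ y in ball (0 : EuclideanSpace ℝ (Fin N)) R \ ball x (d * 2⁻¹),
                ENNReal.ofReal (‖y‖ ^ s2) :=
            lintegral_const_mul' _ _ ENNReal.ofReal_ne_top
        _ ≤ ENNReal.ofReal ((d * 2⁻¹) ^ s1) *
              ∫⁻ y in ball (0 : EuclideanSpace ℝ (Fin N)) R,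
                ENNReal.ofReal (‖y‖ ^ s2) :=
            mul_le_mul_right (lintegral_mono_set diff_subset) _
        _ ≤ ENNReal.ofReal ((d * 2⁻¹) ^ s1) *
              (K2 * ENNReal.ofReal (R ^ ((N:ℝ) + s2))) :=
            mul_le_mul_right (hK2b _ hR) _
        _ < ⊤ := by
            apply ENNReal.mul_lt_top ENNReal.ofReal_lt_top
            exact ENNReal.mul_lt_top hK2.lt_top ENNReal.ofReal_lt_top
    calc (∫⁻ y in ball (0 : EuclideanSpace ℝ (Fin N)) R,
          ENNReal.ofReal (‖x - y‖ ^ s1 * ‖y‖ ^ s2))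
        ≤ ∫⁻ y in ball x (d * 2⁻¹) ∪
            (ball (0 : EuclideanSpace ℝ (Fin N)) R \ ball x (d * 2⁻¹)),
            ENNReal.ofReal (‖x - y‖ ^ s1 * ‖y‖ ^ s2) := lintegral_mono_set hcover
      _ ≤ (∫⁻ y in ball x (d * 2⁻¹), ENNReal.ofReal (‖x - y‖ ^ s1 * ‖y‖ ^ s2)) +
            ∫⁻ y in ball (0 : EuclideanSpace ℝ (Fin N)) R \ ball x (d * 2⁻¹),
              ENNReal.ofReal (‖x - y‖ ^ s1 * ‖y‖ ^ s2) := lintegral_union_le _ _ _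
      _ < ⊤ := ENNReal.add_lt_top.2 ⟨h1, h2⟩
  · -- Part 2
    intro hpp
    set β : ℝ := 2*α - p * ((N:ℝ) + 1 - 2*α) with hβ_def
    have hβ : β < 0 := by
      have h := (div_lt_iff₀ hden).1 hpp
      have : p * ((N:ℝ) + 1 - 2*α) = p * ((N:ℝ) - 2*α + 1) := by ring
      rw [hβ_def, this]
      linarith
    have hsum : (N:ℝ) + (s1 + s2) = β := by
      rw [hs1_def, hs2_def, hβ_def]; ring
    obtain ⟨K3, hK3, hK3b⟩ := lemB N (s := s1 + s2) (by rw [hsum]; exact hβ)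
    set CA : ℝ≥0∞ := K2 * ENNReal.ofReal ((2⁻¹ : ℝ) ^ β) with hCA_def
    set CB : ℝ≥0∞ := K1 * ENNReal.ofReal ((2⁻¹ : ℝ) ^ s2 * (3:ℝ) ^ ((N:ℝ) + s1)) with hCB_def
    set CC : ℝ≥0∞ := ENNReal.ofReal ((2⁻¹ : ℝ) ^ s1) * K3 *
      ENNReal.ofReal ((2:ℝ) ^ β) with hCC_def
    have hKne : CA + CB + CC ≠ ⊤ := by finiteness
    refine ⟨(CA + CB + CC).toReal + 1, by positivity, fun x hx hxR => ?_⟩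
    have hd : 0 < ‖x‖ := norm_pos_iff.2 hx
    set d : ℝ := ‖x‖ with hd_def
    have hcover : ball (0 : EuclideanSpace ℝ (Fin N)) R ⊆
        ball (0 : EuclideanSpace ℝ (Fin N)) (d * 2⁻¹) ∪
          ((ball x (3*d) \ ball (0 : EuclideanSpace ℝ (Fin N)) (d * 2⁻¹)) ∪
            {y : EuclideanSpace ℝ (Fin N) | 2*d ≤ ‖y‖}) := by
      intro y _
      by_cases hy1 : ‖y‖ < d * 2⁻¹
      · exact Or.inl (mem_ball_zero_iff.2 hy1)
      by_cases hy2 : 2*d ≤ ‖y‖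
      · exact Or.inr (Or.inr hy2)
      · refine Or.inr (Or.inl ⟨?_, fun hc => hy1 (mem_ball_zero_iff.1 hc)⟩)
        have hns : ‖y - x‖ ≤ ‖y‖ + ‖x‖ := norm_sub_le y x
        push_neg at hy2
        rw [mem_ball, dist_eq_norm]
        rw [hd_def] at hy2 ⊢
        linarith
    -- Region A
    have hA : (∫⁻ y in ball (0 : EuclideanSpace ℝ (Fin N)) (d * 2⁻¹),
        ENNReal.ofReal (‖x - y‖ ^ s1 * ‖y‖ ^ s2)) ≤ CA * ENNReal.ofReal (d ^ β) := by
      have step : ∀ y ∈ ball (0 : EuclideanSpace ℝ (Fin N)) (d * 2⁻¹),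
          ENNReal.ofReal (‖x - y‖ ^ s1 * ‖y‖ ^ s2) ≤
            ENNReal.ofReal ((d * 2⁻¹) ^ s1) * ENNReal.ofReal (‖y‖ ^ s2) := by
        intro y hy
        have hyn : ‖y‖ < d * 2⁻¹ := mem_ball_zero_iff.1 hy
        have hxy : d * 2⁻¹ ≤ ‖x - y‖ := by
          have := norm_sub_norm_le x y
          rw [← hd_def] at this
          linarith [abs_norm_sub_norm_le x y, norm_sub_norm_le x y]
        rw [hFsplit]
        exact mul_le_mul' (ENNReal.ofReal_le_ofReal
          (Real.rpow_le_rpow_of_nonpos (by positivity) hxy hs1b.le)) le_rfl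
      have halg : (d * 2⁻¹ : ℝ) ^ s1 * (d * 2⁻¹) ^ ((N:ℝ) + s2)
          = d ^ β * (2⁻¹ : ℝ) ^ β := by
        rw [← Real.rpow_add (by positivity),
          show s1 + ((N:ℝ) + s2) = β by rw [hs1_def, hs2_def, hβ_def]; ring,
          Real.mul_rpow hd.le (by norm_num)]
      calc (∫⁻ y in ball (0 : EuclideanSpace ℝ (Fin N)) (d * 2⁻¹),
            ENNReal.ofReal (‖x - y‖ ^ s1 * ‖y‖ ^ s2))
          ≤ ∫⁻ y in ball (0 : EuclideanSpace ℝ (Fin N)) (d * 2⁻¹),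
              ENNReal.ofReal ((d * 2⁻¹) ^ s1) * ENNReal.ofReal (‖y‖ ^ s2) :=
            setLIntegral_mono' measurableSet_ball step
        _ = ENNReal.ofReal ((d * 2⁻¹) ^ s1) *
              ∫⁻ y in ball (0 : EuclideanSpace ℝ (Fin N)) (d * 2⁻¹),
                ENNReal.ofReal (‖y‖ ^ s2) :=
            lintegral_const_mul' _ _ ENNReal.ofReal_ne_top
        _ ≤ ENNReal.ofReal ((d * 2⁻¹) ^ s1) *
              (K2 * ENNReal.ofReal ((d * 2⁻¹) ^ ((N:ℝ) + s2))) :=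
            mul_le_mul_right (hK2b _ (by positivity)) _
        _ = CA * ENNReal.ofReal (d ^ β) := by
            rw [hCA_def, mul_comm (ENNReal.ofReal ((d * 2⁻¹) ^ s1)),
              mul_assoc, ← ENNReal.ofReal_mul (by positivity)]
            rw [show (d * 2⁻¹ : ℝ) ^ ((N:ℝ) + s2) * (d * 2⁻¹) ^ s1
                = (d * 2⁻¹) ^ s1 * (d * 2⁻¹) ^ ((N:ℝ) + s2) from mul_comm _ _, halg,
              ENNReal.ofReal_mul (by positivity), mul_assoc,
              mul_comm (ENNReal.ofReal (d ^ β))]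
    -- Region B
    have hB : (∫⁻ y in ball x (3*d) \ ball (0 : EuclideanSpace ℝ (Fin N)) (d * 2⁻¹),
        ENNReal.ofReal (‖x - y‖ ^ s1 * ‖y‖ ^ s2)) ≤ CB * ENNReal.ofReal (d ^ β) := by
      have step : ∀ y ∈ ball x (3*d) \ ball (0 : EuclideanSpace ℝ (Fin N)) (d * 2⁻¹),
          ENNReal.ofReal (‖x - y‖ ^ s1 * ‖y‖ ^ s2) ≤
            ENNReal.ofReal ((d * 2⁻¹) ^ s2) * ENNReal.ofReal (‖x - y‖ ^ s1) := by
        intro y hy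
        have hyn : d * 2⁻¹ ≤ ‖y‖ := by
          have := hy.2
          rw [mem_ball_zero_iff] at this
          linarith [not_lt.1 this]
        rw [hFsplit, mul_comm]
        exact mul_le_mul' (ENNReal.ofReal_le_ofReal
          (Real.rpow_le_rpow_of_nonpos (by positivity) hyn hs2b.le)) le_rfl
      have halg : (d * 2⁻¹ : ℝ) ^ s2 * (3*d) ^ ((N:ℝ) + s1)
          = d ^ β * ((2⁻¹ : ℝ) ^ s2 * (3:ℝ) ^ ((N:ℝ) + s1)) := by
        have e : d ^ s2 * d ^ ((N:ℝ) + s1) = d ^ β := by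
          rw [← Real.rpow_add hd]
          congr 1
          rw [hs1_def, hs2_def, hβ_def]; ring
        rw [Real.mul_rpow hd.le (by norm_num : (0:ℝ) ≤ 2⁻¹),
          Real.mul_rpow (by norm_num : (0:ℝ) ≤ 3) hd.le]
        linear_combination ((2⁻¹:ℝ) ^ s2 * (3:ℝ) ^ ((N:ℝ) + s1)) * e
      calc (∫⁻ y in ball x (3*d) \ ball (0 : EuclideanSpace ℝ (Fin N)) (d * 2⁻¹),
            ENNReal.ofReal (‖x - y‖ ^ s1 * ‖y‖ ^ s2))
          ≤ ∫⁻ y in ball x (3*d) \ ball (0 : EuclideanSpace ℝ (Fin N)) (d * 2⁻¹),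
              ENNReal.ofReal ((d * 2⁻¹) ^ s2) * ENNReal.ofReal (‖x - y‖ ^ s1) :=
            setLIntegral_mono' (measurableSet_ball.diff measurableSet_ball) step
        _ = ENNReal.ofReal ((d * 2⁻¹) ^ s2) *
              ∫⁻ y in ball x (3*d) \ ball (0 : EuclideanSpace ℝ (Fin N)) (d * 2⁻¹),
                ENNReal.ofReal (‖x - y‖ ^ s1) :=
            lintegral_const_mul' _ _ ENNReal.ofReal_ne_top
        _ ≤ ENNReal.ofReal ((d * 2⁻¹) ^ s2) *
              ∫⁻ y in ball x (3*d), ENNReal.ofReal (‖x - y‖ ^ s1) :=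
            mul_le_mul_right (lintegral_mono_set diff_subset) _
        _ = ENNReal.ofReal ((d * 2⁻¹) ^ s2) *
              ∫⁻ z in ball (0 : EuclideanSpace ℝ (Fin N)) (3*d),
                ENNReal.ofReal (‖z‖ ^ s1) := by rw [lintegral_ball_sub]
        _ ≤ ENNReal.ofReal ((d * 2⁻¹) ^ s2) *
              (K1 * ENNReal.ofReal ((3*d) ^ ((N:ℝ) + s1))) :=
            mul_le_mul_right (hK1b _ (by positivity)) _
        _ = CB * ENNReal.ofReal (d ^ β) := by
            rw [hCB_def, mul_comm (ENNReal.ofReal ((d * 2⁻¹) ^ s2)),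
              mul_assoc, ← ENNReal.ofReal_mul (by positivity),
              show ((3*d:ℝ)) ^ ((N:ℝ) + s1) * (d * 2⁻¹) ^ s2
                = (d * 2⁻¹) ^ s2 * (3*d) ^ ((N:ℝ) + s1) from mul_comm _ _, halg,
              ENNReal.ofReal_mul (by positivity), mul_assoc,
              mul_comm (ENNReal.ofReal (d ^ β))]
    -- Region C
    have hC : (∫⁻ y in {y : EuclideanSpace ℝ (Fin N) | 2*d ≤ ‖y‖},
        ENNReal.ofReal (‖x - y‖ ^ s1 * ‖y‖ ^ s2)) ≤ CC * ENNReal.ofReal (d ^ β) := by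
      have hCmeas : MeasurableSet {y : EuclideanSpace ℝ (Fin N) | 2*d ≤ ‖y‖} :=
        measurableSet_le measurable_const measurable_norm
      have step : ∀ y ∈ {y : EuclideanSpace ℝ (Fin N) | 2*d ≤ ‖y‖},
          ENNReal.ofReal (‖x - y‖ ^ s1 * ‖y‖ ^ s2) ≤
            ENNReal.ofReal ((2⁻¹ : ℝ) ^ s1) * ENNReal.ofReal (‖y‖ ^ (s1 + s2)) := by
        intro y hy
        have hy' : 2*d ≤ ‖y‖ := hy
        have hy0 : 0 < ‖y‖ := by linarith
        have hxy : ‖y‖ * 2⁻¹ ≤ ‖x - y‖ := by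
          have := norm_sub_norm_le y x
          rw [← hd_def, norm_sub_rev] at this
          linarith
        have hbd : ‖x - y‖ ^ s1 ≤ (‖y‖ * 2⁻¹) ^ s1 :=
          Real.rpow_le_rpow_of_nonpos (by positivity) hxy hs1b.le
        have : ‖x - y‖ ^ s1 * ‖y‖ ^ s2 ≤ (2⁻¹ : ℝ) ^ s1 * ‖y‖ ^ (s1 + s2) := by
          have h2 : (‖y‖ * 2⁻¹ : ℝ) ^ s1 = ‖y‖ ^ s1 * (2⁻¹ : ℝ) ^ s1 :=
            Real.mul_rpow hy0.le (by norm_num)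
          have h3 : ‖y‖ ^ s1 * ‖y‖ ^ s2 = ‖y‖ ^ (s1 + s2) := (Real.rpow_add hy0 _ _).symm
          calc ‖x - y‖ ^ s1 * ‖y‖ ^ s2 ≤ (‖y‖ * 2⁻¹) ^ s1 * ‖y‖ ^ s2 :=
                mul_le_mul_of_nonneg_right hbd (Real.rpow_nonneg (norm_nonneg _) _)
            _ = (2⁻¹ : ℝ) ^ s1 * (‖y‖ ^ s1 * ‖y‖ ^ s2) := by rw [h2]; ring
            _ = (2⁻¹ : ℝ) ^ s1 * ‖y‖ ^ (s1 + s2) := by rw [h3]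
        calc ENNReal.ofReal (‖x - y‖ ^ s1 * ‖y‖ ^ s2)
            ≤ ENNReal.ofReal ((2⁻¹ : ℝ) ^ s1 * ‖y‖ ^ (s1 + s2)) :=
              ENNReal.ofReal_le_ofReal this
          _ = ENNReal.ofReal ((2⁻¹ : ℝ) ^ s1) * ENNReal.ofReal (‖y‖ ^ (s1 + s2)) :=
              ENNReal.ofReal_mul (by positivity)
      have halg : ((2*d : ℝ)) ^ ((N:ℝ) + (s1 + s2)) = d ^ β * (2:ℝ) ^ β := by
        rw [Real.mul_rpow (by norm_num : (0:ℝ) ≤ 2) hd.le, hsum, mul_comm]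
      calc (∫⁻ y in {y : EuclideanSpace ℝ (Fin N) | 2*d ≤ ‖y‖},
            ENNReal.ofReal (‖x - y‖ ^ s1 * ‖y‖ ^ s2))
          ≤ ∫⁻ y in {y : EuclideanSpace ℝ (Fin N) | 2*d ≤ ‖y‖},
              ENNReal.ofReal ((2⁻¹ : ℝ) ^ s1) * ENNReal.ofReal (‖y‖ ^ (s1 + s2)) :=
            setLIntegral_mono' hCmeas step
        _ = ENNReal.ofReal ((2⁻¹ : ℝ) ^ s1) *
              ∫⁻ y in {y : EuclideanSpace ℝ (Fin N) | 2*d ≤ ‖y‖},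
                ENNReal.ofReal (‖y‖ ^ (s1 + s2)) :=
            lintegral_const_mul' _ _ ENNReal.ofReal_ne_top
        _ ≤ ENNReal.ofReal ((2⁻¹ : ℝ) ^ s1) *
              (K3 * ENNReal.ofReal ((2*d) ^ ((N:ℝ) + (s1 + s2)))) :=
            mul_le_mul_right (hK3b _ (by positivity)) _
        _ = CC * ENNReal.ofReal (d ^ β) := by
            rw [hCC_def, halg, ENNReal.ofReal_mul (by positivity)]
            ring
    calc (∫⁻ y in ball (0 : EuclideanSpace ℝ (Fin N)) R,
          ENNReal.ofReal (‖x - y‖ ^ s1 * ‖y‖ ^ s2))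
        ≤ ∫⁻ y in ball (0 : EuclideanSpace ℝ (Fin N)) (d * 2⁻¹) ∪
            ((ball x (3*d) \ ball (0 : EuclideanSpace ℝ (Fin N)) (d * 2⁻¹)) ∪
              {y : EuclideanSpace ℝ (Fin N) | 2*d ≤ ‖y‖}),
            ENNReal.ofReal (‖x - y‖ ^ s1 * ‖y‖ ^ s2) := lintegral_mono_set hcover
      _ ≤ (∫⁻ y in ball (0 : EuclideanSpace ℝ (Fin N)) (d * 2⁻¹),
            ENNReal.ofReal (‖x - y‖ ^ s1 * ‖y‖ ^ s2)) +
            ∫⁻ y in (ball x (3*d) \ ball (0 : EuclideanSpace ℝ (Fin N)) (d * 2⁻¹)) ∪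
              {y : EuclideanSpace ℝ (Fin N) | 2*d ≤ ‖y‖},
              ENNReal.ofReal (‖x - y‖ ^ s1 * ‖y‖ ^ s2) := lintegral_union_le _ _ _
      _ ≤ (∫⁻ y in ball (0 : EuclideanSpace ℝ (Fin N)) (d * 2⁻¹),
            ENNReal.ofReal (‖x - y‖ ^ s1 * ‖y‖ ^ s2)) +
            ((∫⁻ y in ball x (3*d) \ ball (0 : EuclideanSpace ℝ (Fin N)) (d * 2⁻¹),
              ENNReal.ofReal (‖x - y‖ ^ s1 * ‖y‖ ^ s2)) +
              ∫⁻ y in {y : EuclideanSpace ℝ (Fin N) | 2*d ≤ ‖y‖},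
                ENNReal.ofReal (‖x - y‖ ^ s1 * ‖y‖ ^ s2)) :=
          add_le_add le_rfl (lintegral_union_le _ _ _)
      _ ≤ CA * ENNReal.ofReal (d ^ β) +
            (CB * ENNReal.ofReal (d ^ β) + CC * ENNReal.ofReal (d ^ β)) :=
          add_le_add hA (add_le_add hB hC)
      _ = (CA + CB + CC) * ENNReal.ofReal (d ^ β) := by ring
      _ ≤ ENNReal.ofReal ((CA + CB + CC).toReal + 1) * ENNReal.ofReal (d ^ β) := by
          refine mul_le_mul_left ?_ _
          conv_lhs => rw [← ENNReal.ofReal_toReal hKne]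
          exact ENNReal.ofReal_le_ofReal (by linarith)
      _ = ENNReal.ofReal (((CA + CB + CC).toReal + 1) * d ^ β) :=
          (ENNReal.ofReal_mul (by positivity)).symm
end

section
/- Let N ≥ 2, α ∈ (1/2,1), and suppose for some c₅ > 0 and all x ≠ y in Ω that |∇ₓG(x,y)| ρ(x)^α ≤ c₅ max{ ρ(y)^{2α-1} D^{1-α} / |x-y|^{N-2α+1}, ρ(y)^{(2α-1)(N-α)/(N-2α+1)} D^{(2α-1)(1-α)/(N-2α+1)} / |x-y|^{N-α} }, where D = sup ρ. Then there exists c₆ > 0 such that for all λ > 1 and y ∈ Ω, the set ω_λ(y) = {x ∈ Ω : |∇ₓG(x,y)| ρ(x)^α > λ} is contained in the ball {x : |x-y| ≤ c₆ ρ(y)^{(2α-1)/(N-2α+1)} λ^{-1/(N-2α+1)}}, and hence its Lebesgue measure satisfies |ω_λ(y)| ≤ c₇ ρ(y)^{(2α-1) p*_α} λ^{-p*_α} with p*_α = N/(N-2α+1). -/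
open MeasureTheory

private lemma aux_le_of_rpow_le {a b e : ℝ} (hb : 0 ≤ b) (he : 0 < e)
    (h : a ^ e ≤ b ^ e) : a ≤ b := by
  by_contra hc
  push_neg at hc
  exact absurd h (not_le.mpr (Real.rpow_lt_rpow hb hc he))

private lemma aux_key {r ρ lam K s t : ℝ} (hρ : 0 ≤ ρ) (hK : 0 ≤ K) (hlam : 0 < lam)
    (hs : 0 < s) (h : r ^ s ≤ K ^ s * ρ ^ (t * s) / lam) :
    r ≤ K * ρ ^ t * lam ^ (-(1/s)) := by
  have hR : 0 ≤ K * ρ ^ t * lam ^ (-(1/s)) := by positivity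
  refine aux_le_of_rpow_le hR hs ?_
  have hRpow : (K * ρ ^ t * lam ^ (-(1/s))) ^ s = K ^ s * ρ ^ (t * s) * lam⁻¹ := by
    rw [Real.mul_rpow (by positivity) (by positivity),
      Real.mul_rpow hK (by positivity), ← Real.rpow_mul hρ,
      ← Real.rpow_mul hlam.le, neg_mul, one_div, inv_mul_cancel₀ hs.ne',
      Real.rpow_neg_one]
  rw [hRpow, mul_comm (K ^ s * ρ ^ (t*s)) lam⁻¹, ← div_eq_inv_mul]
  exact h

theorem stmt_15 (N : ℕ) (hN : 2 ≤ N) (α : ℝ) (hα : 1/2 < α ∧ α < 1)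
    (Ω : Set (EuclideanSpace ℝ (Fin N))) (hΩ : Bornology.IsBounded Ω) (hΩm : MeasurableSet Ω)
    (gradG : EuclideanSpace ℝ (Fin N) → EuclideanSpace ℝ (Fin N) → ℝ)
    (c₅ D : ℝ) (hc₅ : 0 < c₅) (hD : 0 < D)
    (hDsup : ∀ x ∈ Ω, Metric.infDist x Ωᶜ ≤ D)
    (hgradG : ∀ x ∈ Ω, ∀ y ∈ Ω, x ≠ y →
      |gradG x y| * Metric.infDist x Ωᶜ ^ α ≤
        c₅ * max (Metric.infDist y Ωᶜ ^ (2*α - 1) * D ^ (1 - α) / ‖x - y‖ ^ ((N:ℝ) - 2*α + 1))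
          (Metric.infDist y Ωᶜ ^ ((2*α - 1) * ((N:ℝ) - α) / ((N:ℝ) - 2*α + 1)) *
            D ^ ((2*α - 1) * (1 - α) / ((N:ℝ) - 2*α + 1)) / ‖x - y‖ ^ ((N:ℝ) - α))) :
    ∃ c₆ : ℝ, 0 < c₆ ∧ ∃ c₇ : ℝ, 0 < c₇ ∧ ∀ lam : ℝ, 1 < lam → ∀ y ∈ Ω,
      {x ∈ Ω | lam < |gradG x y| * Metric.infDist x Ωᶜ ^ α} ⊆
        {x : EuclideanSpace ℝ (Fin N) |
          ‖x - y‖ ≤ c₆ * Metric.infDist y Ωᶜ ^ ((2*α - 1) / ((N:ℝ) - 2*α + 1)) *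
            lam ^ (-(1 / ((N:ℝ) - 2*α + 1)))} ∧
      volume {x ∈ Ω | lam < |gradG x y| * Metric.infDist x Ωᶜ ^ α} ≤
        ENNReal.ofReal (c₇ * Metric.infDist y Ωᶜ ^ ((2*α - 1) * ((N:ℝ) / ((N:ℝ) - 2*α + 1))) *
          lam ^ (-((N:ℝ) / ((N:ℝ) - 2*α + 1)))) := by
  obtain ⟨hα1, hα2⟩ := hα
  have hN2 : (2:ℝ) ≤ (N:ℝ) := by exact_mod_cast hN
  set β : ℝ := (N:ℝ) - 2*α + 1 with hβdef
  set γ : ℝ := (N:ℝ) - α with hγdef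
  have hβ : 0 < β := by rw [hβdef]; linarith
  have hγ : 0 < γ := by rw [hγdef]; linarith
  have hγβ : γ ≤ β := by rw [hβdef, hγdef]; linarith
  have h2α : 0 < 2*α - 1 := by linarith
  set K1 : ℝ := (c₅ * D ^ (1 - α)) ^ (1/β) with hK1def
  set K2 : ℝ := (c₅ * D ^ ((2*α - 1) * (1 - α) / β)) ^ (1/γ) with hK2def
  have hK1 : 0 < K1 := by positivity
  have hK2 : 0 < K2 := by positivity
  set c₆ : ℝ := max K1 K2 with hc₆def
  have hc₆ : 0 < c₆ := lt_max_of_lt_left hK1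
  set V : ENNReal := volume (Metric.ball (0 : EuclideanSpace ℝ (Fin N)) 1) with hVdef
  have hVpos : 0 < V := Metric.measure_ball_pos _ _ one_pos
  have hVfin : V < ⊤ := measure_ball_lt_top
  have hVt : 0 < V.toReal := ENNReal.toReal_pos hVpos.ne' hVfin.ne
  refine ⟨c₆, hc₆, c₆ ^ N * V.toReal, by positivity, ?_⟩
  intro lam hlam y hyΩ
  have hlam0 : 0 < lam := lt_trans one_pos hlam
  set ρ : ℝ := Metric.infDist y Ωᶜ with hρdef
  have hρ0 : 0 ≤ ρ := Metric.infDist_nonneg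
  have hsub : {x ∈ Ω | lam < |gradG x y| * Metric.infDist x Ωᶜ ^ α} ⊆
      {x : EuclideanSpace ℝ (Fin N) |
        ‖x - y‖ ≤ c₆ * ρ ^ ((2*α - 1) / β) * lam ^ (-(1/β))} := by
    intro x hx
    obtain ⟨hxΩ, hlt⟩ := hx
    simp only [Set.mem_setOf_eq]
    by_cases hxy : x = y
    · subst hxy
      simp only [sub_self, norm_zero]
      positivity
    · have hr : 0 < ‖x - y‖ := by
        rw [norm_pos_iff]
        exact sub_ne_zero.mpr hxy
      have hbound := lt_of_lt_of_le hlt (hgradG x hxΩ y hyΩ hxy)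
      rcases max_choice (ρ ^ (2*α - 1) * D ^ (1 - α) / ‖x - y‖ ^ β)
          (ρ ^ ((2*α - 1) * γ / β) * D ^ ((2*α - 1) * (1 - α) / β) / ‖x - y‖ ^ γ)
          with hmax | hmax <;> rw [hmax] at hbound
      · -- case A
        have hrβ : ‖x - y‖ ^ β ≤ K1 ^ β * ρ ^ ((2*α - 1) / β * β) / lam := by
          have hK1β : K1 ^ β = c₅ * D ^ (1 - α) := by
            rw [hK1def, ← Real.rpow_mul (by positivity), one_div,
              inv_mul_cancel₀ hβ.ne', Real.rpow_one]
          rw [hK1β, div_mul_cancel₀ _ hβ.ne']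
          have hrb : (0:ℝ) < ‖x - y‖ ^ β := Real.rpow_pos_of_pos hr β
          have h4 : lam * ‖x - y‖ ^ β < c₅ * (ρ ^ (2*α - 1) * D ^ (1 - α)) := by
            have h5 := mul_lt_mul_of_pos_right hbound hrb
            rwa [mul_assoc, div_mul_cancel₀ _ hrb.ne'] at h5
          rw [le_div_iff₀ hlam0]
          nlinarith [h4]
        have := aux_key hρ0 hK1.le hlam0 hβ hrβ
        calc ‖x - y‖ ≤ K1 * ρ ^ ((2*α-1)/β) * lam ^ (-(1/β)) := this
          _ ≤ c₆ * ρ ^ ((2*α-1)/β) * lam ^ (-(1/β)) := by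
              gcongr
              exact le_max_left _ _
      · -- case B
        have hexp : (2*α - 1) * γ / β = (2*α - 1) / β * γ := by ring
        have hrγ : ‖x - y‖ ^ γ ≤ K2 ^ γ * ρ ^ ((2*α - 1) / β * γ) / lam := by
          have hK2γ : K2 ^ γ = c₅ * D ^ ((2*α - 1) * (1 - α) / β) := by
            rw [hK2def, ← Real.rpow_mul (by positivity), one_div,
              inv_mul_cancel₀ hγ.ne', Real.rpow_one]
          rw [hK2γ, ← hexp]
          have hrb : (0:ℝ) < ‖x - y‖ ^ γ := Real.rpow_pos_of_pos hr γ
          have h4 : lam * ‖x - y‖ ^ γ <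
              c₅ * (ρ ^ ((2*α - 1) * γ / β) * D ^ ((2*α - 1) * (1 - α) / β)) := by
            have h5 := mul_lt_mul_of_pos_right hbound hrb
            rwa [mul_assoc, div_mul_cancel₀ _ hrb.ne'] at h5
          rw [le_div_iff₀ hlam0]
          nlinarith [h4]
        have h1 := aux_key hρ0 hK2.le hlam0 hγ hrγ
        have h2 : lam ^ (-(1/γ)) ≤ lam ^ (-(1/β)) := by
          apply Real.rpow_le_rpow_of_exponent_le hlam.le
          have : 1/β ≤ 1/γ := one_div_le_one_div_of_le hγ hγβ
          linarith
        calc ‖x - y‖ ≤ K2 * ρ ^ ((2*α-1)/β) * lam ^ (-(1/γ)) := h1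
          _ ≤ c₆ * ρ ^ ((2*α-1)/β) * lam ^ (-(1/β)) := by
              apply mul_le_mul _ h2 (by positivity) (by positivity)
              gcongr
              exact le_max_right _ _
  refine ⟨hsub, ?_⟩
  set R : ℝ := c₆ * ρ ^ ((2*α - 1) / β) * lam ^ (-(1/β)) with hRdef
  have hR0 : 0 ≤ R := by positivity
  have hsub2 : {x ∈ Ω | lam < |gradG x y| * Metric.infDist x Ωᶜ ^ α} ⊆
      Metric.closedBall y R := by
    intro x hx
    have := hsub hx
    rw [Metric.mem_closedBall, dist_eq_norm]
    exact this
  have hRN : R ^ N = c₆ ^ N * ρ ^ ((2*α - 1) * ((N:ℝ) / β)) * lam ^ (-((N:ℝ)/β)) := by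
    rw [hRdef, mul_pow, mul_pow, ← Real.rpow_natCast (ρ ^ ((2*α-1)/β)) N,
      ← Real.rpow_natCast (lam ^ (-(1/β))) N, ← Real.rpow_mul hρ0,
      ← Real.rpow_mul hlam0.le]
    congr 2 <;> ring
  calc volume {x ∈ Ω | lam < |gradG x y| * Metric.infDist x Ωᶜ ^ α}
      ≤ volume (Metric.closedBall y R) := measure_mono hsub2
    _ = ENNReal.ofReal (R ^ Module.finrank ℝ (EuclideanSpace ℝ (Fin N))) * V :=
        Measure.addHaar_closedBall _ _ hR0
    _ = ENNReal.ofReal (R ^ N * V.toReal) := by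
        rw [finrank_euclideanSpace_fin, ENNReal.ofReal_mul (by positivity),
          ENNReal.ofReal_toReal hVfin.ne]
    _ ≤ ENNReal.ofReal (c₆ ^ N * V.toReal *
          ρ ^ ((2*α - 1) * ((N:ℝ) / β)) * lam ^ (-((N:ℝ)/β))) := by
        apply ENNReal.ofReal_le_ofReal
        rw [hRN]
        ring_nf
        exact le_refl _
end
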